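/- arXiv:0804.1677 — 2 statements merged into one kernel-verified Lean document; each statement's English description precedes it below -/
import Mathlib

section
/- Let 𝕜 be a field and l a simple Lie algebra over 𝕜 (i.e. l is nonabelian and has no Lie ideals other than {0} and l). Let h be a Lie subalgebra of the product Lie algebra l × l such that π₁(h) = l and π₂(h) = l. Then at least one of the following holds: (1) l × {0} ⊆ h; (2) {0} × l ⊆ h; (3) there exists a Lie algebra automorphism σ of l with h = {(X, σ(X)) : X ∈ l}. -/
/-- The product of two Lie rings, with componentwise bracket. -/
instance Prod.instLieRing {L M : Type*} [LieRing L] [LieRing M] : LieRing (L × M) where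
  bracket x y := (⁅x.1, y.1⁆, ⁅x.2, y.2⁆)
  add_lie x y z := by
    show (⁅(x + y).1, z.1⁆, ⁅(x + y).2, z.2⁆)
        = (⁅x.1, z.1⁆, ⁅x.2, z.2⁆) + (⁅y.1, z.1⁆, ⁅y.2, z.2⁆)
    simp [add_lie]
  lie_add x y z := by
    show (⁅x.1, (y + z).1⁆, ⁅x.2, (y + z).2⁆)
        = (⁅x.1, y.1⁆, ⁅x.2, y.2⁆) + (⁅x.1, z.1⁆, ⁅x.2, z.2⁆)
    simp [lie_add]
  lie_self x := by
    show (⁅x.1, x.1⁆, ⁅x.2, x.2⁆) = 0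
    simp
  leibniz_lie x y z := by
    show (⁅x.1, ⁅y.1, z.1⁆⁆, ⁅x.2, ⁅y.2, z.2⁆⁆)
        = (⁅⁅x.1, y.1⁆, z.1⁆, ⁅⁅x.2, y.2⁆, z.2⁆) + (⁅y.1, ⁅x.1, z.1⁆⁆, ⁅y.2, ⁅x.2, z.2⁆⁆)
    rw [Prod.mk_add_mk]
    exact congrArg₂ Prod.mk (leibniz_lie _ _ _) (leibniz_lie _ _ _)

@[simp] theorem Prod.bracket_def {L M : Type*} [LieRing L] [LieRing M] (x y : L × M) :
    ⁅x, y⁆ = (⁅x.1, y.1⁆, ⁅x.2, y.2⁆) := rfl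

/-- The product of two Lie algebras, with componentwise bracket. -/
instance Prod.instLieAlgebra {R L M : Type*} [CommRing R] [LieRing L] [LieRing M]
    [LieAlgebra R L] [LieAlgebra R M] : LieAlgebra R (L × M) where
  lie_smul t x y := by
    show (⁅x.1, (t • y).1⁆, ⁅x.2, (t • y).2⁆) = t • (⁅x.1, y.1⁆, ⁅x.2, y.2⁆)
    simp

/-- If `l` is a simple Lie algebra and `h ⊆ l × l` is a Lie subalgebra
projecting onto `l` under both canonical projections, then `h` contains `l × {0}`, or
`h` contains `{0} × l`, or `h` is the graph of a Lie algebra automorphism of `l`. -/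
theorem lieSubalgebra_of_prod_simple_trichotomy
    (𝕜 : Type*) [Field 𝕜] (l : Type*) [LieRing l] [LieAlgebra 𝕜 l]
    [LieAlgebra.IsSimple 𝕜 l]
    (h : LieSubalgebra 𝕜 (l × l))
    (hπ₁ : ∀ x : l, ∃ y : l, ((x, y) : l × l) ∈ h)
    (hπ₂ : ∀ y : l, ∃ x : l, ((x, y) : l × l) ∈ h) :
    (∀ x : l, ((x, (0 : l)) : l × l) ∈ h) ∨
    (∀ y : l, (((0 : l), y) : l × l) ∈ h) ∨
    (∃ σ : l ≃ₗ⁅𝕜⁆ l, ∀ p : l × l, p ∈ h ↔ p.2 = σ p.1) := by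

  classical
  by_cases h1 : ∀ x : l, ((x, (0 : l)) : l × l) ∈ h
  · exact Or.inl h1
  by_cases h2 : ∀ y : l, (((0 : l), y) : l × l) ∈ h
  · exact Or.inr (Or.inl h2)
  refine Or.inr (Or.inr ?_)
  -- the two "kernel" ideals
  let K₁ : LieIdeal 𝕜 l :=
    { carrier := {x | ((x, (0 : l)) : l × l) ∈ h}
      add_mem' := fun {a b} ha hb => by
        have := h.add_mem ha hb; simpa using this
      zero_mem' := by
        have := h.zero_mem; exact this
      smul_mem' := fun t a ha => by
        have := h.smul_mem t ha; simpa using this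
      lie_mem := fun {x m} hm => by
        obtain ⟨b, hb⟩ := hπ₁ x
        have := h.lie_mem hb hm
        simpa using this }
  let K₂ : LieIdeal 𝕜 l :=
    { carrier := {y | (((0 : l), y) : l × l) ∈ h}
      add_mem' := fun {a b} ha hb => by
        have := h.add_mem ha hb; simpa using this
      zero_mem' := by
        have := h.zero_mem; exact this
      smul_mem' := fun t a ha => by
        have := h.smul_mem t ha; simpa using this
      lie_mem := fun {x m} hm => by
        obtain ⟨a, ha⟩ := hπ₂ x
        have := h.lie_mem ha hm
        simpa using this }
  have hK₁ : K₁ = ⊥ := by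
    rcases eq_bot_or_eq_top K₁ with hb | ht
    · exact hb
    · exact absurd (fun x => show x ∈ K₁ from ht ▸ LieSubmodule.mem_top x) h1
  have hK₂ : K₂ = ⊥ := by
    rcases eq_bot_or_eq_top K₂ with hb | ht
    · exact hb
    · exact absurd (fun y => show y ∈ K₂ from ht ▸ LieSubmodule.mem_top y) h2
  have huniq : ∀ {x y y' : l}, ((x, y) : l × l) ∈ h → ((x, y') : l × l) ∈ h → y = y' := by
    intro x y y' hy hy'
    have hs : (((0 : l), y - y') : l × l) ∈ h := by
      have := h.sub_mem hy hy'; simpa using this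
    have : y - y' ∈ K₂ := hs
    rw [hK₂] at this
    exact sub_eq_zero.mp ((LieSubmodule.mem_bot _).mp this)
  -- the graph function
  let f : l → l := fun x => Classical.choose (hπ₁ x)
  have hf : ∀ x : l, ((x, f x) : l × l) ∈ h := fun x => Classical.choose_spec (hπ₁ x)
  let σ' : l →ₗ⁅𝕜⁆ l :=
    { toFun := f
      map_add' := fun a b => huniq (hf (a + b)) (by simpa using h.add_mem (hf a) (hf b))
      map_smul' := fun t a => huniq (hf (t • a)) (by simpa using h.smul_mem t (hf a))
      map_lie' := fun {a b} => huniq (hf ⁅a, b⁆) (by simpa using h.lie_mem (hf a) (hf b)) }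
  have hbij : Function.Bijective σ' := by
    constructor
    · intro a b hab
      have hs : ((a - b, (0 : l)) : l × l) ∈ h := by
        have := h.sub_mem (hf a) (hf b)
        simpa [show f a = f b from hab] using this
      have : a - b ∈ K₁ := hs
      rw [hK₁] at this
      exact sub_eq_zero.mp ((LieSubmodule.mem_bot _).mp this)
    · intro y
      obtain ⟨x, hx⟩ := hπ₂ y
      exact ⟨x, huniq (hf x) hx⟩
  refine ⟨LieEquiv.ofBijective σ' hbij, fun p => ⟨fun hp => ?_, fun hp => ?_⟩⟩
  · exact (huniq (hf p.1) hp).symm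
  · have := hf p.1
    rw [show p = (p.1, f p.1) from Prod.ext rfl hp]
    exact this
end

section
/- For column vectors x, y ∈ ℂ³, let F(x,y) = x ȳᵗ − y x̄ᵗ and F₀(x,y) = F(x,y) − (1/3)·tr(F(x,y))·I. Then for every nonzero x ∈ ℂ³ and every y ∈ ℂ³: F₀(x,y) = 0 if and only if there exists a real number α with y = α·x. In particular, if x and y are both nonzero and F₀(x,y) = 0, then x and y are linearly dependent over ℝ. -/
/-- `F(x,y) = x ȳᵗ − y x̄ᵗ`: the 3×3 complex matrix with `(i,j)` entry
`x i * conj (y j) − y i * conj (x j)`. -/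
noncomputable def F (x y : Fin 3 → ℂ) : Matrix (Fin 3) (Fin 3) ℂ :=
  Matrix.of fun i j => x i * star (y j) - y i * star (x j)

/-- `F₀(x,y) = F(x,y) − (1/3)·tr(F(x,y))·I`, the trace-free part of `F(x,y)`. -/
noncomputable def F₀ (x y : Fin 3 → ℂ) : Matrix (Fin 3) (Fin 3) ℂ :=
  F x y - ((1 / 3 : ℂ) * (F x y).trace) • (1 : Matrix (Fin 3) (Fin 3) ℂ)

lemma F₀_key (x y : Fin 3 → ℂ) (i : Fin 3) (hxi : x i ≠ 0) (h : F₀ x y = 0) :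
    ∃ α : ℝ, y = (α : ℂ) • x := by
  have hF : F x y = ((1 / 3 : ℂ) * (F x y).trace) • (1 : Matrix (Fin 3) (Fin 3) ℂ) :=
    sub_eq_zero.mp h
  have hoff : ∀ a b : Fin 3, a ≠ b → x a * star (y b) - y a * star (x b) = 0 := by
    intro a b hab
    have := congrFun (congrFun hF a) b
    simpa [F, Matrix.one_apply, hab] using this
  have hdiag : ∀ a b : Fin 3,
      x a * star (y a) - y a * star (x a) = x b * star (y b) - y b * star (x b) := by
    intro a b
    have ha := congrFun (congrFun hF a) a
    have hb := congrFun (congrFun hF b) b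
    simp [F, Matrix.one_apply] at ha hb
    exact ha.trans hb.symm
  obtain ⟨α, hyi⟩ : ∃ α : ℂ, y i = α * x i := ⟨y i / x i, by field_simp⟩
  obtain ⟨j, hji⟩ : ∃ j : Fin 3, j ≠ i := by
    rcases eq_or_ne i 0 with rfl | h0
    · exact ⟨1, by decide⟩
    · exact ⟨0, Ne.symm h0⟩
  have hyj : ∀ k : Fin 3, k ≠ i → y k = star α * x k := by
    intro k hk
    have h1 := hoff i k (Ne.symm hk)
    have h2 : star (y k) = α * star (x k) :=
      mul_left_cancel₀ hxi (by rw [hyi] at h1; linear_combination h1)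
    calc y k = star (star (y k)) := by simp
    _ = star α * x k := by rw [h2]; simp [mul_comm]
  have hreal : star α = α := by
    have hd := hdiag i j
    have e1 : x i * star (y i) - y i * star (x i) = (star α - α) * (x i * star (x i)) := by
      rw [hyi, star_mul]; ring
    have e2 : x j * star (y j) - y j * star (x j) = (α - star α) * (x j * star (x j)) := by
      rw [hyj j hji, star_mul, star_star]; ring
    have key : (star α - α) * (x i * star (x i) + x j * star (x j)) = 0 := by
      rw [e1, e2] at hd; linear_combination hd
    have hpos : x i * star (x i) + x j * star (x j) ≠ 0 := by
      have h1 : x i * star (x i) = (Complex.normSq (x i) : ℂ) := by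
        exact_mod_cast Complex.mul_conj (x i)
      have h2 : x j * star (x j) = (Complex.normSq (x j) : ℂ) := by
        exact_mod_cast Complex.mul_conj (x j)
      rw [h1, h2]
      have : (0:ℝ) < Complex.normSq (x i) + Complex.normSq (x j) := by
        have := Complex.normSq_pos.mpr hxi
        have := Complex.normSq_nonneg (x j)
        linarith
      exact_mod_cast ne_of_gt this
    rcases mul_eq_zero.mp key with h | h
    · linear_combination h
    · exact absurd h hpos
  have hare : (α.re : ℂ) = α := Complex.conj_eq_iff_re.mp hreal
  refine ⟨α.re, funext fun k => ?_⟩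
  rcases eq_or_ne k i with rfl | hk
  · simp only [Pi.smul_apply, smul_eq_mul, hyi, hare]
  · simp only [Pi.smul_apply, smul_eq_mul, hyj k hk, hreal, hare]

/-- For nonzero `x ∈ ℂ³` and any `y ∈ ℂ³`, `F₀(x,y) = 0` holds if and
only if `y = α • x` for some real `α`. In particular, if moreover `y ≠ 0` and
`F₀(x,y) = 0`, then `x` and `y` are linearly dependent over `ℝ`. -/
theorem F₀_eq_zero_iff_real_multiple (x y : Fin 3 → ℂ) (hx : x ≠ 0) :
    (F₀ x y = 0 ↔ ∃ α : ℝ, y = (α : ℂ) • x) ∧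
      (y ≠ 0 → F₀ x y = 0 → ¬ LinearIndependent ℝ ![x, y]) := by
  have hiff : F₀ x y = 0 ↔ ∃ α : ℝ, y = (α : ℂ) • x := by
    constructor
    · intro h
      obtain ⟨i, hxi⟩ := Function.ne_iff.mp hx
      exact F₀_key x y i hxi h
    · rintro ⟨α, rfl⟩
      have hFz : F x ((α : ℂ) • x) = 0 := by
        ext a b
        simp only [F, Matrix.of_apply, Pi.smul_apply, smul_eq_mul, star_mul,
          Matrix.zero_apply]
        have : star (α : ℂ) = (α : ℂ) := by simp
        rw [this]; ring
      unfold F₀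
      rw [hFz]
      simp
  refine ⟨hiff, fun hy h0 hli => ?_⟩
  obtain ⟨α, hα⟩ := hiff.mp h0
  have hα0 : α ≠ 0 := by
    rintro rfl
    apply hy
    simpa using hα
  rw [linearIndependent_fin2] at hli
  apply hli.2 α⁻¹
  show α⁻¹ • ![x, y] 1 = ![x, y] 0
  simp only [Matrix.cons_val_one, Matrix.head_cons, Matrix.cons_val_zero, hα]
  funext k
  simp [Pi.smul_apply, Complex.real_smul]
  exact inv_mul_cancel_left₀ (by exact_mod_cast hα0) _
end
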